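/- Let V be a finite set, Q : V × V → ℤ antisymmetric, n ≥ 2, q := ω^{n²}. The map X_v ↦ Z_v^n extends to an injective R-algebra homomorphism from the quantum torus T_q(Q) = R⟨X_v^{±1}⟩/(X_v X_w = q^{2Q(v,w)} X_w X_v) into T_ω(Q) = R⟨Z_v^{±1}⟩/(Z_v Z_w = ω^{2Q(v,w)} Z_w Z_v). -/

import Mathlib

/-- The image of a unit of `R` in the units of an `R`-algebra `A`. -/
noncomputable def unitsMap {R A : Type} [CommRing R] [Ring A] [Algebra R A] (w : Rˣ) : Aˣ :=
  Units.map (algebraMap R A).toMonoidHom w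

/-- The (unordered) Laurent monomial `∏ Z_v^{t_v}` along a list of vertices. -/
def listMono {A V : Type} [Ring A] (Z : V → Aˣ) (t : V → ℤ) (l : List V) : Aˣ :=
  (l.map fun v => Z v ^ t v).prod

/-- `A`, with distinguished units `Z_v`, is the quantum torus
`T_ω(Q) = R⟨Z_v^{±1}⟩/(Z_v Z_w = ω^{2Q(v,w)} Z_w Z_v)`: the relations hold, and the
monomials `Z^t`, `t ∈ ℤ^V`, form an `R`-basis of `A`. -/
structure IsQuantumTorus (R : Type) [CommRing R] {V : Type} [Fintype V] [LinearOrder V]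
    (A : Type) [Ring A] [Algebra R A] (w : Rˣ) (Q : V → V → ℤ) (Z : V → Aˣ) : Prop where
  rel : ∀ v v', Z v * Z v' = unitsMap (A := A) w ^ (2 * Q v v') * (Z v' * Z v)
  free : Function.Bijective fun c : (V → ℤ) →₀ R =>
    c.sum fun t r => r • ((listMono Z t (Finset.univ.sort (· ≤ ·)) : Aˣ) : A)

section Aux

/-- In a group, if `g h = c (h g)` with `c` central, then `g^a h^b = c^(ab) (h^b g^a)`. -/
lemma zpow_comm_of_rel {G : Type*} [Group G] {c g h : G} (hc : ∀ x : G, Commute c x)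
    (hrel : g * h = c * (h * g)) (a b : ℤ) :
    g ^ a * h ^ b = c ^ (a * b) * (h ^ b * g ^ a) := by
  have s1 : SemiconjBy g h (c * h) := by
    unfold SemiconjBy
    rw [hrel, mul_assoc]
  have s2 : g * h ^ b = c ^ b * h ^ b * g := by
    have := s1.zpow_right b
    rwa [(hc h).mul_zpow] at this
  have s3 : SemiconjBy (h ^ b) g (c ^ (-b) * g) := by
    show h ^ b * g = c ^ (-b) * g * h ^ b
    calc h ^ b * g = c ^ (-b) * (c ^ b * h ^ b * g) := by
          rw [← mul_assoc, ← mul_assoc, ← zpow_add, neg_add_cancel, zpow_zero, one_mul]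
      _ = c ^ (-b) * (g * h ^ b) := by rw [← s2]
      _ = c ^ (-b) * g * h ^ b := by rw [mul_assoc]
  have s4 : h ^ b * g ^ a = (c ^ (-b)) ^ a * g ^ a * h ^ b := by
    have := s3.zpow_right a
    rwa [((hc g).zpow_left (-b)).mul_zpow] at this
  calc g ^ a * h ^ b
      = c ^ (a * b) * ((c ^ (-b)) ^ a * (g ^ a * h ^ b)) := by
        rw [← zpow_mul, ← mul_assoc, ← zpow_add]
        have : a * b + -b * a = 0 := by ring
        rw [this, zpow_zero, one_mul]
    _ = c ^ (a * b) * ((c ^ (-b)) ^ a * g ^ a * h ^ b) := by rw [mul_assoc ((c ^ (-b)) ^ a)]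
    _ = c ^ (a * b) * (h ^ b * g ^ a) := by rw [← s4]

variable {R A : Type} [CommRing R] [Ring A] [Algebra R A]

lemma unitsMap_commute (w : Rˣ) (x : Aˣ) : Commute (unitsMap (A := A) w) x :=
  Units.ext <| by
    simpa [unitsMap] using Algebra.commutes ((w : R)) ((x : A))

lemma unitsMap_zpow_commute (w : Rˣ) (k : ℤ) (x : Aˣ) :
    Commute (unitsMap (A := A) w ^ k) x :=
  (unitsMap_commute w x).zpow_left k

variable {V : Type} (Q : V → V → ℤ)

/-- The commutation phase picked up when merging two sorted monomials. -/
def phase (t s : V → ℤ) : List V → ℤ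
  | [] => 0
  | v :: l => -((l.map fun v' => 2 * Q v v' * s v * t v').sum) + phase t s l

lemma phase_nil (t s : V → ℤ) : phase Q t s [] = 0 := rfl

lemma phase_cons (t s : V → ℤ) (v : V) (l : List V) :
    phase Q t s (v :: l) = -((l.map fun v' => 2 * Q v v' * s v * t v').sum) + phase Q t s l :=
  rfl

lemma phase_smul (m : ℤ) (t s : V → ℤ) (l : List V) :
    phase Q (fun v => m * t v) (fun v => m * s v) l = (m * m) * phase Q t s l := by
  induction l with
  | nil => simp [phase]
  | cons v l ih =>
    rw [phase_cons, phase_cons, ih]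
    have : (l.map fun v' => 2 * Q v v' * (m * s v) * (m * t v')).sum
        = (l.map fun v' => (m * m) * (2 * Q v v' * s v * t v')).sum := by
      congr 1
      exact List.map_congr_left fun v' _ => by ring
    rw [this, List.sum_map_mul_left]
    ring

variable {Q}

lemma listMono_nil {Z : V → Aˣ} (t : V → ℤ) : listMono Z t [] = 1 := rfl

lemma listMono_cons {Z : V → Aˣ} (t : V → ℤ) (v : V) (l : List V) :
    listMono Z t (v :: l) = Z v ^ t v * listMono Z t l := by
  simp [listMono]

lemma listMono_eq_one {Z : V → Aˣ} {t : V → ℤ} {l : List V} (h : ∀ u ∈ l, t u = 0) :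
    listMono Z t l = 1 := by
  induction l with
  | nil => rfl
  | cons v l ih =>
    rw [listMono_cons, h v (by simp), ih fun u hu => h u (by simp [hu]), zpow_zero, one_mul]

lemma listMono_single [DecidableEq V] {Z : V → Aˣ} (v : V) (k : ℤ) {l : List V}
    (hnd : l.Nodup) (hv : v ∈ l) : listMono Z (Pi.single v k) l = Z v ^ k := by
  induction l with
  | nil => simp at hv
  | cons a l ih =>
    rcases List.mem_cons.1 hv with h | h
    · subst h
      rw [listMono_cons, Pi.single_eq_same,
        listMono_eq_one fun u hu => by
          rw [Pi.single_eq_of_ne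
            (fun (e : u = v) => (List.nodup_cons.1 hnd).1 (by rw [← e]; exact hu))], mul_one]
    · have hne : a ≠ v := fun (e : a = v) => (List.nodup_cons.1 hnd).1 (by rw [e]; exact h)
      rw [listMono_cons, Pi.single_eq_of_ne hne, zpow_zero, one_mul,
        ih (List.nodup_cons.1 hnd).2 h]

section Torus

variable [Fintype V] [LinearOrder V] {w : Rˣ} {Z : V → Aˣ}
  (hT : IsQuantumTorus R A w Q Z)

include hT

lemma rel_zpow (v v' : V) (a b : ℤ) :
    Z v ^ a * Z v' ^ b
      = unitsMap (A := A) w ^ (2 * Q v v' * a * b) * (Z v' ^ b * Z v ^ a) := by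
  have := zpow_comm_of_rel (c := unitsMap (A := A) w ^ (2 * Q v v'))
    (unitsMap_zpow_commute w _) (hT.rel v v') a b
  rwa [← zpow_mul, ← mul_assoc (2 * Q v v') a b] at this

lemma swap_listMono (v : V) (b : ℤ) (t : V → ℤ) (l : List V) :
    Z v ^ b * listMono Z t l
      = unitsMap (A := A) w ^ ((l.map fun v' => 2 * Q v v' * b * t v').sum)
          * (listMono Z t l * Z v ^ b) := by
  induction l with
  | nil => simp [listMono_nil]
  | cons u l ih =>
    rw [listMono_cons, List.map_cons, List.sum_cons]
    calc Z v ^ b * (Z u ^ t u * listMono Z t l)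
        = (Z v ^ b * Z u ^ t u) * listMono Z t l := by rw [mul_assoc]
      _ = unitsMap (A := A) w ^ (2 * Q v u * b * t u)
            * (Z u ^ t u * (Z v ^ b * listMono Z t l)) := by
          rw [rel_zpow hT v u b (t u)]; group
      _ = unitsMap (A := A) w ^ (2 * Q v u * b * t u)
            * (Z u ^ t u * (unitsMap (A := A) w ^ ((l.map fun v' => 2 * Q v v' * b * t v').sum)
                * (listMono Z t l * Z v ^ b))) := by rw [ih]
      _ = unitsMap (A := A) w ^ (2 * Q v u * b * t u)
            * (unitsMap (A := A) w ^ ((l.map fun v' => 2 * Q v v' * b * t v').sum)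
                * (Z u ^ t u * (listMono Z t l * Z v ^ b))) := by
          rw [((unitsMap_zpow_commute w ((l.map fun v' => 2 * Q v v' * b * t v').sum)
            (Z u ^ t u)).symm).left_comm]
      _ = unitsMap (A := A) w
            ^ (2 * Q v u * b * t u + (l.map fun v' => 2 * Q v v' * b * t v').sum)
            * (Z u ^ t u * listMono Z t l * Z v ^ b) := by
          rw [zpow_add]; group

lemma listMono_mul (t s : V → ℤ) (l : List V) :
    listMono Z t l * listMono Z s l
      = unitsMap (A := A) w ^ phase Q t s l * listMono Z (t + s) l := by
  induction l with
  | nil => simp [listMono_nil, phase_nil]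
  | cons v l ih =>
    have hswap := swap_listMono hT v (s v) t l
    have hM : listMono Z t l * Z v ^ s v
        = unitsMap (A := A) w ^ (-((l.map fun v' => 2 * Q v v' * s v * t v').sum))
            * (Z v ^ s v * listMono Z t l) := by
      rw [hswap, ← mul_assoc, ← zpow_add, neg_add_cancel, zpow_zero, one_mul]
    rw [listMono_cons, listMono_cons, listMono_cons (t := t + s), phase_cons]
    calc Z v ^ t v * listMono Z t l * (Z v ^ s v * listMono Z s l)
        = Z v ^ t v * (listMono Z t l * Z v ^ s v) * listMono Z s l := by group
      _ = Z v ^ t v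
            * (unitsMap (A := A) w ^ (-((l.map fun v' => 2 * Q v v' * s v * t v').sum))
                * (Z v ^ s v * listMono Z t l)) * listMono Z s l := by rw [hM]
      _ = unitsMap (A := A) w ^ (-((l.map fun v' => 2 * Q v v' * s v * t v').sum))
            * (Z v ^ t v * Z v ^ s v * (listMono Z t l * listMono Z s l)) := by
          rw [((unitsMap_zpow_commute w (-((l.map fun v' => 2 * Q v v' * s v * t v').sum))
            (Z v ^ t v)).symm).left_comm]
          group
      _ = unitsMap (A := A) w ^ (-((l.map fun v' => 2 * Q v v' * s v * t v').sum))
            * (Z v ^ ((t + s) v)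
                * (unitsMap (A := A) w ^ phase Q t s l * listMono Z (t + s) l)) := by
          rw [ih, ← zpow_add (Z v)]
          rfl
      _ = unitsMap (A := A) w ^ (-((l.map fun v' => 2 * Q v v' * s v * t v').sum))
            * (unitsMap (A := A) w ^ phase Q t s l
                * (Z v ^ ((t + s) v) * listMono Z (t + s) l)) := by
          rw [((unitsMap_zpow_commute w (phase Q t s l) (Z v ^ ((t + s) v))).symm).left_comm]
      _ = unitsMap (A := A) w
            ^ (-((l.map fun v' => 2 * Q v v' * s v * t v').sum) + phase Q t s l)
            * (Z v ^ ((t + s) v) * listMono Z (t + s) l) := by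
          rw [zpow_add]; group

end Torus

end Aux

lemma unitsMap_zpow {R A : Type} [CommRing R] [Ring A] [Algebra R A] (u : Rˣ) (k : ℤ) :
    unitsMap (A := A) (u ^ k) = unitsMap (A := A) u ^ k :=
  map_zpow (Units.map (algebraMap R A).toMonoidHom) u k

/-- The map `X_v ↦ Z_v^n` extends to an injective `R`-algebra homomorphism from the
Fock–Goncharov quantum torus `T_q(Q)` (with `q = ω^{n²}`) into its `n`-th root version
`T_ω(Q)`. -/
theorem stmt14 {R : Type} [CommRing R] [IsDomain R] (w σ : Rˣ) (hσ : σ * σ = w)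
    (n : ℕ) (hn : 2 ≤ n)
    {V : Type} [Fintype V] [LinearOrder V]
    (Q : V → V → ℤ) (hQ : ∀ u v, Q u v = - Q v u)
    (Aq Aw : Type) [Ring Aq] [Algebra R Aq] [Ring Aw] [Algebra R Aw]
    (X : V → Aqˣ) (Z : V → Awˣ)
    (hq : IsQuantumTorus R Aq (w ^ (n ^ 2)) Q X)
    (hw : IsQuantumTorus R Aw w Q Z) :
    ∃ f : Aq →ₐ[R] Aw, Function.Injective f ∧ ∀ v, f ((X v : Aq)) = ((Z v : Aw)) ^ n := by
  classical
  set l : List V := Finset.univ.sort (· ≤ ·) with hl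
  set eX : (V → ℤ) → Aq := fun t => ((listMono X t l : Aqˣ) : Aq) with heX
  set eZ : (V → ℤ) → Aw := fun t => ((listMono Z t l : Awˣ) : Aw) with heZ
  set totq : ((V → ℤ) →₀ R) →ₗ[R] Aq := Finsupp.linearCombination R eX with htotq
  set totw : ((V → ℤ) →₀ R) →ₗ[R] Aw := Finsupp.linearCombination R eZ with htotw
  have bq : Function.Bijective totq := hq.free
  have bw : Function.Bijective totw := hw.free
  set Bq : ((V → ℤ) →₀ R) ≃ₗ[R] Aq := LinearEquiv.ofBijective totq bq with hBq
  set d : (V → ℤ) → (V → ℤ) := fun t v => (n : ℤ) * t v with hd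
  set flin : Aq →ₗ[R] Aw :=
    (totw.comp (Finsupp.lmapDomain R R d)).comp Bq.symm.toLinearMap with hflin
  have hn0 : (n : ℤ) ≠ 0 := by exact_mod_cast (by omega : n ≠ 0)
  have hdinj : Function.Injective d := by
    intro t s h
    funext v
    exact mul_left_cancel₀ hn0 (congrFun h v)
  have hinj : Function.Injective flin := by
    intro x y h
    apply Bq.symm.injective
    apply Finsupp.mapDomain_injective hdinj
    exact bw.injective h
  have hcsum : ∀ c : (V → ℤ) →₀ R, totq c = c.sum fun t r => r • eX t :=
    fun c => Finsupp.linearCombination_apply R c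
  have feval : ∀ t, flin (eX t) = eZ (d t) := by
    intro t
    have h1 : Bq.symm (eX t) = Finsupp.single t 1 := by
      apply Bq.injective
      rw [Bq.apply_symm_apply]
      show eX t = totq (Finsupp.single t 1)
      rw [htotq, Finsupp.linearCombination_single, one_smul]
    show totw (Finsupp.mapDomain d (Bq.symm (eX t))) = eZ (d t)
    rw [h1, Finsupp.mapDomain_single, htotw, Finsupp.linearCombination_single, one_smul]
  have heX0 : eX 0 = 1 := by
    show ((listMono X (0 : V → ℤ) l : Aqˣ) : Aq) = 1
    rw [listMono_eq_one (t := (0 : V → ℤ)) (l := l) fun u _ => rfl, Units.val_one]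
  have heZ0 : eZ 0 = 1 := by
    show ((listMono Z (0 : V → ℤ) l : Awˣ) : Aw) = 1
    rw [listMono_eq_one (t := (0 : V → ℤ)) (l := l) fun u _ => rfl, Units.val_one]
  have hd0 : d 0 = 0 := funext fun v => by simp [hd]
  have hone : flin 1 = 1 := by
    rw [← heX0, feval 0, hd0, heZ0]
  -- scalar computation
  have hscal : ∀ k : ℤ, ((w ^ n ^ 2 : Rˣ)) ^ k = w ^ (((n : ℤ) * (n : ℤ)) * k) := by
    intro k
    rw [← zpow_natCast w (n ^ 2), ← zpow_mul]
    congr 1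
    push_cast
    ring
  have keymul : ∀ t s, flin (eX t * eX s) = flin (eX t) * flin (eX s) := by
    intro t s
    have hds : d t + d s = d (t + s) := funext fun v => by
      show (n : ℤ) * t v + (n : ℤ) * s v = (n : ℤ) * (t v + s v)
      ring
    have h1 : eX t * eX s
        = (((w ^ n ^ 2) ^ phase Q t s l : Rˣ) : R) • eX (t + s) := by
      have := congrArg (Units.val (α := Aq)) (listMono_mul hq t s l)
      rw [Units.val_mul, Units.val_mul] at this
      rw [heX]
      show ((listMono X t l : Aqˣ) : Aq) * ((listMono X s l : Aqˣ) : Aq) = _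
      rw [this, ← unitsMap_zpow, Algebra.smul_def]
      rfl
    have h2 : eZ (d t) * eZ (d s)
        = ((w ^ phase Q (d t) (d s) l : Rˣ) : R) • eZ (d t + d s) := by
      have := congrArg (Units.val (α := Aw)) (listMono_mul hw (d t) (d s) l)
      rw [Units.val_mul, Units.val_mul] at this
      rw [heZ]
      show ((listMono Z (d t) l : Awˣ) : Aw) * ((listMono Z (d s) l : Awˣ) : Aw) = _
      rw [this, ← unitsMap_zpow, Algebra.smul_def]
      rfl
    have hph : phase Q (d t) (d s) l = ((n : ℤ) * (n : ℤ)) * phase Q t s l :=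
      phase_smul Q ((n : ℤ)) t s l
    rw [h1, map_smul, feval, feval, feval, ← hds, h2, hph, hscal]
  have key2 : ∀ t (y : Aq), flin (eX t * y) = flin (eX t) * flin y := by
    intro t y
    obtain ⟨c, rfl⟩ := bq.surjective y
    calc flin (eX t * totq c)
        = c.sum fun s r => r • flin (eX t * eX s) := by
          rw [hcsum, Finsupp.mul_sum, map_finsuppSum]
          exact Finsupp.sum_congr fun s _ => by rw [mul_smul_comm, map_smul]
      _ = c.sum fun s r => r • (flin (eX t) * flin (eX s)) :=
          Finsupp.sum_congr fun s _ => by rw [keymul]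
      _ = flin (eX t) * flin (totq c) := by
          rw [hcsum, map_finsuppSum, Finsupp.mul_sum]
          exact (Finsupp.sum_congr fun s _ => by rw [map_smul, mul_smul_comm]).symm
  have hmul : ∀ x y : Aq, flin (x * y) = flin x * flin y := by
    intro x y
    obtain ⟨c, rfl⟩ := bq.surjective x
    calc flin (totq c * y)
        = c.sum fun t r => r • flin (eX t * y) := by
          rw [hcsum, Finsupp.sum_mul, map_finsuppSum]
          exact Finsupp.sum_congr fun t _ => by rw [smul_mul_assoc, map_smul]
      _ = c.sum fun t r => r • (flin (eX t) * flin y) :=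
          Finsupp.sum_congr fun t _ => by rw [key2]
      _ = flin (totq c) * flin y := by
          rw [hcsum, map_finsuppSum, Finsupp.sum_mul]
          exact (Finsupp.sum_congr fun t _ => by rw [map_smul, smul_mul_assoc]).symm
  refine ⟨AlgHom.ofLinearMap flin hone hmul, hinj, ?_⟩
  intro v
  have hvmem : v ∈ l := (Finset.mem_sort (· ≤ ·)).2 (Finset.mem_univ v)
  have hnd : l.Nodup := Finset.sort_nodup Finset.univ (· ≤ ·)
  have hXv : ((X v : Aqˣ) : Aq) = eX (Pi.single v 1) := by
    show ((X v : Aqˣ) : Aq) = ((listMono X (Pi.single v 1) l : Aqˣ) : Aq)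
    rw [listMono_single v 1 hnd hvmem, zpow_one]
  have hdsingle : d (Pi.single v 1) = Pi.single v ((n : ℤ)) := funext fun u => by
    by_cases h : u = v
    · subst h; simp [hd]
    · simp [hd, Pi.single_eq_of_ne h]
  show flin ((X v : Aqˣ) : Aq) = ((Z v : Awˣ) : Aw) ^ n
  rw [hXv, feval, hdsingle]
  show ((listMono Z (Pi.single v ((n : ℤ))) l : Awˣ) : Aw) = ((Z v : Awˣ) : Aw) ^ n
  rw [listMono_single v ((n : ℤ)) hnd hvmem, zpow_natCast, Units.val_pow_eq_pow_val]
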